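/- Let F = (AR, att) be an argument graph. For every grounded extension E ∈ gr(F), the set d(E) is a grounded extension of defenses of DG(F), i.e., d(E) ∈ GR(DG(F)). -/

import Mathlib

open Set

/-- An argument graph (argumentation framework): a finite set of arguments
with an attack relation between arguments of the graph. -/
structure AF (A : Type*) where
  AR : Set A
  att : A → A → Prop
  finite : AR.Finite
  att_mem : ∀ a b, att a b → a ∈ AR ∧ b ∈ AR

namespace AF

variable {A : Type*} (F : AF A)

/-- An argument is initial if no argument attacks it. -/
def Initial (a : A) : Prop := ∀ b, ¬ F.att b a

/-- A set of arguments is conflict-free. -/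
def ConflictFree (E : Set A) : Prop :=
  E ⊆ F.AR ∧ ∀ a ∈ E, ∀ b ∈ E, ¬ F.att a b

/-- α is defended by E: every attacker of α is attacked by E. -/
def Defends (E : Set A) (a : A) : Prop :=
  ∀ b, F.att b a → ∃ c ∈ E, F.att c b

def Admissible (E : Set A) : Prop :=
  F.ConflictFree E ∧ ∀ a ∈ E, F.Defends E a

def Complete (E : Set A) : Prop :=
  F.Admissible E ∧ ∀ a ∈ F.AR, F.Defends E a → a ∈ E

/-- The set of complete extensions. -/
def co : Set (Set A) := {E | F.Complete E}

/-- The set of grounded extensions (minimal complete extensions). -/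
def gr : Set (Set A) := {E | F.Complete E ∧ ∀ E', F.Complete E' → E ⊆ E'}

/-- The set of preferred extensions (maximal complete extensions). -/
def pr : Set (Set A) := {E | F.Complete E ∧ ∀ E', F.Complete E' → E ⊆ E' → E = E'}

/-- The set of stable extensions. -/
def st : Set (Set A) :=
  {E | F.ConflictFree E ∧ ∀ a ∈ F.AR, a ∉ E → ∃ b ∈ E, F.att b a}

/-- The set of defenses of `F`.  A defense is either a pair `⟨some α, β⟩` with
`{α, β}` conflict-free and some `γ` with `α→γ` and `γ→β`, or a pair
`⟨none, β⟩` with `β` initial (`none` plays the role of `⌀`). -/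
def nmd : Set (Option A × A) :=
  {p | (∃ α, p.1 = some α ∧ α ∈ F.AR ∧ p.2 ∈ F.AR ∧
          F.ConflictFree {α, p.2} ∧
          ∃ γ, γ ∈ F.AR ∧ F.att α γ ∧ F.att γ p.2)
     ∨ (p.1 = none ∧ p.2 ∈ F.AR ∧ F.Initial p.2)}

/-- The set of defeaters of defenses (DoDs) of `F`. -/
def und : Set (Option A × A) :=
  {p | (∃ α, p.1 = some α ∧ α ∈ F.AR ∧ p.2 ∈ F.AR ∧
          ¬ F.ConflictFree {α, p.2} ∧
          ∃ γ, γ ∈ F.AR ∧ γ ≠ α ∧ γ ≠ p.2 ∧ F.att α γ ∧ F.att γ p.2)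
     ∨ (p.1 = none ∧ p.2 ∈ F.AR ∧
          (F.att p.2 p.2 ∨ ∃ γ, F.att γ γ ∧ F.att γ p.2))}

/-- Nodes of the defense graph: defenses together with their defeaters. -/
def dgn : Set (Option A × A) := F.nmd ∪ F.und

/-- Lifting of the attack relation to `Option`: conditions mentioning `⌀` are false. -/
def oatt (x y : Option A) : Prop := ∃ a b, x = some a ∧ y = some b ∧ F.att a b

/-- The attack relation `→d` of the defense graph:
`[x,α] →d [y,β]` iff `x→y`, `x→β`, `α→y` or `α→β`. -/
def dAtt (p q : Option A × A) : Prop :=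
  F.oatt p.1 q.1 ∨ F.oatt p.1 (some q.2) ∨ F.oatt (some p.2) q.1 ∨ F.att p.2 q.2

/-- Conflict-freeness of a set of defenses. -/
def DConflictFree (D : Set (Option A × A)) : Prop :=
  D ⊆ F.nmd ∧ ∀ X ∈ D, ∀ Y ∈ D, ¬ F.dAtt X Y

/-- A defense X is defended by D in the defense graph. -/
def DDefends (D : Set (Option A × A)) (X : Option A × A) : Prop :=
  ∀ Y ∈ F.dgn, F.dAtt Y X → ∃ Z ∈ D, F.dAtt Z Y

def DAdmissible (D : Set (Option A × A)) : Prop :=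
  F.DConflictFree D ∧ ∀ X ∈ D, F.DDefends D X

def DComplete (D : Set (Option A × A)) : Prop :=
  F.DAdmissible D ∧ ∀ X ∈ F.nmd, F.DDefends D X → X ∈ D

/-- Complete extensions of defenses of the defense graph DG(F). -/
def CO : Set (Set (Option A × A)) := {D | F.DComplete D}

/-- Grounded extensions of defenses (minimal complete extensions of defenses). -/
def GR : Set (Set (Option A × A)) :=
  {D | F.DComplete D ∧ ∀ D', F.DComplete D' → D ⊆ D'}

/-- Preferred extensions of defenses (maximal complete extensions of defenses). -/
def PR : Set (Set (Option A × A)) :=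
  {D | F.DComplete D ∧ ∀ D', F.DComplete D' → D ⊆ D' → D = D'}

/-- Stable extensions of defenses. -/
def ST : Set (Set (Option A × A)) :=
  {D | F.DConflictFree D ∧ ∀ X ∈ F.dgn, X ∉ D → ∃ Z ∈ D, F.dAtt Z X}

/-- `def(D)`: the defendees and defenders occurring in `D`. -/
def defSet (D : Set (Option A × A)) : Set A :=
  {a | a ∈ F.AR ∧ ((∃ x, (x, a) ∈ D) ∨ (∃ b, ((some a : Option A), b) ∈ D))}

/-- `d(E) = {⟨x,y⟩ ∈ nmd(F) : x ∈ E ∪ {⌀} and y ∈ E}`. -/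
def dE (E : Set A) : Set (Option A × A) :=
  {p | p ∈ F.nmd ∧ (p.1 = none ∨ ∃ a ∈ E, p.1 = some a) ∧ p.2 ∈ E}

/-- The arguments occurring in some defeater of defenses of `F`. -/
def argUnd : Set A :=
  {a | a ∈ F.AR ∧ ((∃ b, ((some a : Option A), b) ∈ F.und) ∨ ∃ x, (x, a) ∈ F.und)}

/-- The c-kernel of `F`. -/
def ck : AF A where
  AR := F.AR
  att a b := F.att a b ∧ ¬(a ≠ b ∧ F.att a a ∧ F.att b b)
  finite := F.finite
  att_mem a b h := F.att_mem a b h.1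

/-- Union of two argument graphs. -/
def union (F G : AF A) : AF A where
  AR := F.AR ∪ G.AR
  att a b := F.att a b ∨ G.att a b
  finite := F.finite.union G.finite
  att_mem a b h := by
    rcases h with h | h
    · exact ⟨Or.inl (F.att_mem a b h).1, Or.inl (F.att_mem a b h).2⟩
    · exact ⟨Or.inr (G.att_mem a b h).1, Or.inr (G.att_mem a b h).2⟩

/-- A set of defenses `D` regarded as a binary relation on `AR ∪ {⌀}`. -/
def dRel (D : Set (Option A × A)) : Option A → Option A → Prop :=
  fun x y => ∃ b, y = some b ∧ (x, b) ∈ D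

/-- The root reason `RR(α, D)` of `α` w.r.t. an extension of defenses `D`,
where `D⁺` is the transitive closure of `D`. -/
def RR (α : A) (D : Set (Option A × A)) : Set (Option A) :=
  {x | (F.Initial α ∧ x = none) ∨
       (¬ F.Initial α ∧ ∃ β, x = some β ∧ β ∈ F.AR ∧
         ((Relation.TransGen (dRel D) (some β) (some β) ∧ β = α) ∨
          (Relation.TransGen (dRel D) (some β) (some α) ∧
            (Relation.TransGen (dRel D) (some β) (some β) ∨ F.Initial β))))}

/-- The set of root reasons for accepting `α` under complete defense semantics. -/
def rrCO (α : A) : Set (Set (Option A)) :=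
  {S | ∃ D ∈ F.CO, S = F.RR α D}

end AF


section Statement7Aux

open AF

variable {A : Type*}

/-- `e` occurs as a component of the pair `p`. -/
def cOf (p : Option A × A) (e : A) : Prop := p.1 = some e ∨ p.2 = e

theorem dAtt_iff (F : AF A) (p q : Option A × A) :
    F.dAtt p q ↔ ∃ e w, cOf p e ∧ cOf q w ∧ F.att e w := by
  constructor
  · rintro (⟨a, b, h1, h2, h3⟩ | ⟨a, b, h1, h2, h3⟩ | ⟨a, b, h1, h2, h3⟩ | h)
    · exact ⟨a, b, Or.inl h1, Or.inl h2, h3⟩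
    · cases Option.some.inj h2
      exact ⟨a, _, Or.inl h1, Or.inr rfl, h3⟩
    · cases Option.some.inj h1
      exact ⟨_, b, Or.inr rfl, Or.inl h2, h3⟩
    · exact ⟨p.2, q.2, Or.inr rfl, Or.inr rfl, h⟩
  · rintro ⟨e, w, (h1 | h1), (h2 | h2), h3⟩
    · exact Or.inl ⟨e, w, h1, h2, h3⟩
    · exact Or.inr (Or.inl ⟨e, w, h1, by rw [h2], h3⟩)
    · exact Or.inr (Or.inr (Or.inl ⟨e, w, by rw [h1], h2, h3⟩))
    · exact Or.inr (Or.inr (Or.inr (by rw [← h1, ← h2] at h3; exact h3)))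

theorem dE_comp (F : AF A) {E : Set A} {X : Option A × A} (hX : X ∈ F.dE E)
    {e : A} (he : cOf X e) : e ∈ E := by
  obtain ⟨-, h1, h2⟩ := hX
  rcases he with he | he
  · rcases h1 with h1 | ⟨a, haE, h1⟩
    · rw [h1] at he; simp at he
    · rw [h1] at he; cases Option.some.inj he; exact haE
  · rw [← he]; exact h2

theorem Defends_mono (F : AF A) {S T : Set A} (h : S ⊆ T) {a : A}
    (hd : F.Defends S a) : F.Defends T a := by
  intro b hb
  obtain ⟨c, hc, hcb⟩ := hd b hb
  exact ⟨c, h hc, hcb⟩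

/-- Iterates of the characteristic function from the empty set. -/
def It (F : AF A) : ℕ → Set A
  | 0 => ∅
  | n + 1 => {a | a ∈ F.AR ∧ F.Defends (It F n) a}

theorem It_succ_mono (F : AF A) : ∀ n, It F n ⊆ It F (n + 1)
  | 0 => fun _ ha => ha.elim
  | n + 1 => fun a ha => ⟨ha.1, Defends_mono F (It_succ_mono F n) ha.2⟩

theorem It_mono (F : AF A) : Monotone (It F) :=
  monotone_nat_of_le_succ (It_succ_mono F)

theorem It_subset (F : AF A) {E : Set A} (hE : F.Complete E) : ∀ n, It F n ⊆ E
  | 0 => fun _ ha => ha.elim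
  | n + 1 => fun a ha => hE.2 a ha.1 (Defends_mono F (It_subset F hE n) ha.2)

theorem exists_bound {α : Type*} {s : Set α} (hs : s.Finite) (P : α → ℕ → Prop)
    (hmono : ∀ x m n, m ≤ n → P x m → P x n)
    (h : ∀ x ∈ s, ∃ n, P x n) : ∃ N, ∀ x ∈ s, P x N := by
  refine Set.Finite.induction_on
    (motive := fun s _ => (∀ x ∈ s, ∃ n, P x n) → ∃ N, ∀ x ∈ s, P x N) s hs
    (fun _ => ⟨0, fun x hx => absurd hx (Set.notMem_empty x)⟩) ?_ h
  intro a s' _ _ ih h'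
  obtain ⟨N, hN⟩ := ih (fun x hx => h' x (Set.mem_insert_of_mem _ hx))
  obtain ⟨n, hn⟩ := h' _ (Set.mem_insert _ _)
  refine ⟨max n N, fun x hx => ?_⟩
  rcases Set.mem_insert_iff.1 hx with rfl | hxs
  · exact hmono _ _ _ (le_max_left _ _) hn
  · exact hmono _ _ _ (le_max_right _ _) (hN x hxs)

theorem E_eq_iUnion (F : AF A) {E : Set A} (hE : E ∈ F.gr) : E = ⋃ n, It F n := by
  have hsub : (⋃ n, It F n) ⊆ E := Set.iUnion_subset (It_subset F hE.1)
  have hLAR : (⋃ n, It F n) ⊆ F.AR := hsub.trans hE.1.1.1.1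
  have hLcomplete : F.Complete (⋃ n, It F n) := by
    refine ⟨⟨⟨hLAR, fun a ha b hb hab => hE.1.1.1.2 a (hsub ha) b (hsub hb) hab⟩, ?_⟩, ?_⟩
    · intro a ha
      obtain ⟨n, hn⟩ := Set.mem_iUnion.1 ha
      match n, hn with
      | n + 1, hn => exact Defends_mono F (Set.subset_iUnion (It F) n) hn.2
    · intro a haAR hd
      have hfin : {b | F.att b a}.Finite :=
        F.finite.subset (fun b hb => (F.att_mem b a hb).1)
      obtain ⟨N, hN⟩ := exists_bound hfin
        (fun b n => ∃ c ∈ It F n, F.att c b)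
        (fun b m n hmn ⟨c, hc, hcb⟩ => ⟨c, It_mono F hmn hc, hcb⟩)
        (fun b hb => by
          obtain ⟨c, hcL, hcb⟩ := hd b hb
          obtain ⟨n, hn⟩ := Set.mem_iUnion.1 hcL
          exact ⟨n, c, hn, hcb⟩)
      exact Set.mem_iUnion.2 ⟨N + 1, haAR, fun b hb => hN b hb⟩
  exact le_antisymm (hE.2 _ hLcomplete) hsub

theorem cf_pair (F : AF A) {E : Set A} (hE : E ∈ F.gr) {x y : A}
    (hx : x ∈ E) (hy : y ∈ E) : F.ConflictFree {x, y} := by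
  have hmem : ∀ z ∈ ({x, y} : Set A), z ∈ E := by
    intro z hz
    rcases Set.mem_insert_iff.1 hz with rfl | hz
    · exact hx
    · rw [Set.mem_singleton_iff] at hz; subst hz; exact hy
  exact ⟨fun z hz => hE.1.1.1.1 (hmem z hz),
    fun u hu v hv => hE.1.1.1.2 u (hmem u hu) v (hmem v hv)⟩

theorem exists_dE_snd (F : AF A) {E : Set A} (hE : E ∈ F.gr) {c : A} (hc : c ∈ E) :
    ∃ Z ∈ F.dE E, Z.2 = c := by
  have hcAR : c ∈ F.AR := hE.1.1.1.1 hc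
  by_cases hinit : F.Initial c
  · exact ⟨(none, c), ⟨Or.inr ⟨rfl, hcAR, hinit⟩, Or.inl rfl, hc⟩, rfl⟩
  · unfold AF.Initial at hinit
    push_neg at hinit
    obtain ⟨b, hbc⟩ := hinit
    obtain ⟨c', hc'E, hc'b⟩ := hE.1.1.2 c hc b hbc
    exact ⟨(some c', c),
      ⟨Or.inl ⟨c', rfl, hE.1.1.1.1 hc'E, hcAR, cf_pair F hE hc'E hc,
        b, (F.att_mem b c hbc).1, hc'b, hbc⟩,
       Or.inr ⟨c', hc'E, rfl⟩, hc⟩, rfl⟩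

theorem defends_of_ddefended (F : AF A) {E : Set A} (hE : E ∈ F.gr) {X : Option A × A}
    (hdef : ∀ Y ∈ F.dgn, F.dAtt Y X → ∃ Z ∈ F.dE E, F.dAtt Z Y)
    {c : A} (hc : cOf X c) : F.Defends E c := by
  intro a ha
  have haAR : a ∈ F.AR := (F.att_mem a c ha).1
  by_cases hA : F.Initial a ∨ F.att a a ∨ ∃ s, F.att s s ∧ F.att s a
  · have hY : ((none, a) : Option A × A) ∈ F.dgn := by
      rcases hA with h | h
      · exact Or.inl (Or.inr ⟨rfl, haAR, h⟩)
      · exact Or.inr (Or.inr ⟨rfl, haAR, h⟩)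
    have hYatt : F.dAtt (none, a) X :=
      (dAtt_iff F _ _).2 ⟨a, c, Or.inr rfl, hc, ha⟩
    obtain ⟨Z, hZ, hZY⟩ := hdef _ hY hYatt
    obtain ⟨e, w, he, hw, hew⟩ := (dAtt_iff F _ _).1 hZY
    refine ⟨e, dE_comp F hZ he, ?_⟩
    rcases hw with hw | hw
    · exact absurd hw (by simp [cOf])
    · rw [show a = w from hw] ; exact hew
  · push_neg at hA
    obtain ⟨hnotinit, hnaa, hns⟩ := hA
    by_contra hcon
    push_neg at hcon
    unfold AF.Initial at hnotinit
    push_neg at hnotinit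
    obtain ⟨b, hba⟩ := hnotinit
    have hbAR : b ∈ F.AR := (F.att_mem b a hba).1
    have hbdef : F.Defends E b := by
      intro y hyb
      have hyAR : y ∈ F.AR := (F.att_mem y b hyb).1
      have hby : b ≠ y := by rintro rfl; exact hns b hyb hba
      have hbna : b ≠ a := by rintro rfl; exact hnaa hba
      have hY : ((some y, a) : Option A × A) ∈ F.dgn := by
        by_cases hcf : F.ConflictFree {y, a}
        · exact Or.inl (Or.inl ⟨y, rfl, hyAR, haAR, hcf, b, hbAR, hyb, hba⟩)
        · exact Or.inr (Or.inl ⟨y, rfl, hyAR, haAR, hcf, b, hbAR, hby, hbna, hyb, hba⟩)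
      have hYatt : F.dAtt (some y, a) X :=
        (dAtt_iff F _ _).2 ⟨a, c, Or.inr rfl, hc, ha⟩
      obtain ⟨Z, hZ, hZY⟩ := hdef _ hY hYatt
      obtain ⟨e, w, he, hw, hew⟩ := (dAtt_iff F _ _).1 hZY
      have heE : e ∈ E := dE_comp F hZ he
      rcases hw with hw | hw
      · have hwy : w = y := (Option.some.inj hw).symm
        refine ⟨e, heE, ?_⟩
        rw [hwy] at hew; exact hew
      · exact absurd (by rw [show a = w from hw]; exact hew) (hcon e heE)
    have hbE : b ∈ E := hE.1.2 b hbAR hbdef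
    exact hcon b hbE hba

theorem dE_DComplete (F : AF A) {E : Set A} (hE : E ∈ F.gr) : F.DComplete (F.dE E) := by
  refine ⟨⟨⟨fun X hX => hX.1, ?_⟩, ?_⟩, ?_⟩
  · intro X hX Y hY hXY
    obtain ⟨e, w, he, hw, hew⟩ := (dAtt_iff F _ _).1 hXY
    exact hE.1.1.1.2 e (dE_comp F hX he) w (dE_comp F hY hw) hew
  · intro X hX Y hY hYX
    obtain ⟨e, w, he, hw, hew⟩ := (dAtt_iff F _ _).1 hYX
    have hwE : w ∈ E := dE_comp F hX hw
    obtain ⟨d, hdE, hde⟩ := hE.1.1.2 w hwE e hew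
    obtain ⟨Z, hZ, hZ2⟩ := exists_dE_snd F hE hdE
    exact ⟨Z, hZ, (dAtt_iff F _ _).2 ⟨d, e, Or.inr hZ2, he, hde⟩⟩
  · intro X hXnmd hXdef
    rcases hXnmd with ⟨α, hX1, hαAR, hX2AR, hcf, hγ⟩ | ⟨hX1, hX2AR, hX2init⟩
    · have hdefα : F.Defends E α :=
        defends_of_ddefended F hE hXdef (Or.inl hX1)
      have hdefβ : F.Defends E X.2 :=
        defends_of_ddefended F hE hXdef (Or.inr rfl)
      have hαE : α ∈ E := hE.1.2 α hαAR hdefα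
      have hβE : X.2 ∈ E := hE.1.2 X.2 hX2AR hdefβ
      exact ⟨Or.inl ⟨α, hX1, hαAR, hX2AR, hcf, hγ⟩, Or.inr ⟨α, hαE, hX1⟩, hβE⟩
    · have hβE : X.2 ∈ E :=
        hE.1.2 X.2 hX2AR (fun b hb => absurd hb (hX2init b))
      exact ⟨Or.inr ⟨hX1, hX2AR, hX2init⟩, Or.inl hX1, hβE⟩

theorem JK (F : AF A) {E : Set A} (hE : E ∈ F.gr) {D' : Set (Option A × A)}
    (hD' : F.DComplete D') (n : ℕ) :
    (∀ c ∈ It F n, ∀ e, F.att e c → ∃ Z ∈ D', ∃ w, cOf Z w ∧ F.att w e) ∧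
    (∀ c ∈ It F n, ∃ Z ∈ D', Z.2 = c) := by
  induction n with
  | zero => exact ⟨fun c hc => hc.elim, fun c hc => hc.elim⟩
  | succ n ih =>
    have hK : ∀ c ∈ It F (n + 1), ∀ e, F.att e c →
        ∃ Z ∈ D', ∃ w, cOf Z w ∧ F.att w e := by
      intro c hc e hec
      obtain ⟨c'', hc''It, hc''e⟩ := hc.2 e hec
      obtain ⟨Z, hZD, hZ2⟩ := ih.2 c'' hc''It
      exact ⟨Z, hZD, c'', Or.inr hZ2, hc''e⟩
    refine ⟨hK, ?_⟩
    intro c hc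
    obtain ⟨hcAR, hcd⟩ := hc
    by_cases hinit : F.Initial c
    · refine ⟨(none, c), hD'.2 _ (Or.inr ⟨rfl, hcAR, hinit⟩) ?_, rfl⟩
      intro Y hY hYZ
      obtain ⟨e, w, he, hw, hew⟩ := (dAtt_iff F _ _).1 hYZ
      exfalso
      rcases hw with hw | hw
      · exact absurd hw (by simp [cOf])
      · exact hinit e (by rw [show c = w from hw]; exact hew)
    · unfold AF.Initial at hinit
      push_neg at hinit
      obtain ⟨b, hbc⟩ := hinit
      obtain ⟨c', hc'It, hc'b⟩ := hcd b hbc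
      have hcIt1 : c ∈ It F (n + 1) := ⟨hcAR, hcd⟩
      have hc'It1 : c' ∈ It F (n + 1) := It_succ_mono F n hc'It
      have hcE : c ∈ E := It_subset F hE.1 (n + 1) hcIt1
      have hc'E : c' ∈ E := It_subset F hE.1 n hc'It
      have hZnmd : ((some c', c) : Option A × A) ∈ F.nmd :=
        Or.inl ⟨c', rfl, hE.1.1.1.1 hc'E, hcAR, cf_pair F hE hc'E hcE,
          b, (F.att_mem b c hbc).1, hc'b, hbc⟩
      refine ⟨(some c', c), hD'.2 _ hZnmd ?_, rfl⟩
      intro Y hY hYZ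
      obtain ⟨e, w, he, hw, hew⟩ := (dAtt_iff F _ _).1 hYZ
      have hwIt : w ∈ It F (n + 1) := by
        rcases hw with hw | hw
        · cases Option.some.inj hw; exact hc'It1
        · cases show c = w from hw; exact hcIt1
      obtain ⟨Z', hZ'D, w', hw'comp, hw'e⟩ := hK w hwIt e hew
      exact ⟨Z', hZ'D, (dAtt_iff F _ _).2 ⟨w', e, hw'comp, he, hw'e⟩⟩

theorem dE_subset_of_DComplete (F : AF A) {E : Set A} (hE : E ∈ F.gr)
    {D' : Set (Option A × A)} (hD' : F.DComplete D') : F.dE E ⊆ D' := by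
  intro X hX
  refine hD'.2 X hX.1 ?_
  intro Y hY hYX
  obtain ⟨e, w, he, hw, hew⟩ := (dAtt_iff F _ _).1 hYX
  have hwE : w ∈ E := dE_comp F hX hw
  have hwL : w ∈ ⋃ n, It F n := by rw [← E_eq_iUnion F hE]; exact hwE
  obtain ⟨n, hn⟩ := Set.mem_iUnion.1 hwL
  obtain ⟨Z, hZD, w', hcomp, hw'e⟩ := (JK F hE hD' n).1 w hn e hew
  exact ⟨Z, hZD, (dAtt_iff F _ _).2 ⟨w', e, hcomp, he, hw'e⟩⟩

end Statement7Aux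

/-- for every grounded extension `E` of `F`,
`d(E)` is a grounded extension of defenses of the defense graph of `F`. -/
theorem statement7 {A : Type*} (F : AF A) (E : Set A)
    (hE : E ∈ F.gr) : F.dE E ∈ F.GR :=
  ⟨dE_DComplete F hE, fun D' hD' => dE_subset_of_DComplete F hE hD'⟩
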